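/- For b = 2, the sequence s_2 satisfies s_2(0)=0, s_2(1)=1, s_2(2n)=s_2(n), and s_2(2n+1)=s_2(n)+s_2(n+1) for all n ≥ 0 (i.e., s_2 is Stern's diatomic sequence). -/

import Mathlib

namespace Stmt1Aux

open Finsupp

noncomputable def tl (f : ℕ →₀ ℕ) : ℕ →₀ ℕ :=
  Finsupp.comapDomain Nat.succ f (Set.injOn_of_injective Nat.succ_injective)

@[simp] lemma tl_apply (f : ℕ →₀ ℕ) (i : ℕ) : tl f i = f (i + 1) := rfl

noncomputable def cns (a : ℕ) (g : ℕ →₀ ℕ) : ℕ →₀ ℕ :=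
  Finsupp.single 0 a + Finsupp.embDomain ⟨Nat.succ, Nat.succ_injective⟩ g

@[simp] lemma cns_apply_zero (a : ℕ) (g : ℕ →₀ ℕ) : cns a g 0 = a := by
  simp [cns, Finsupp.embDomain_notin_range]

@[simp] lemma cns_apply_succ (a : ℕ) (g : ℕ →₀ ℕ) (i : ℕ) : cns a g (i + 1) = g i := by
  have h : Finsupp.embDomain ⟨Nat.succ, Nat.succ_injective⟩ g (i + 1) = g i :=
    Finsupp.embDomain_apply_self ⟨Nat.succ, Nat.succ_injective⟩ g i
  simp [cns, h, Finsupp.single_apply]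

lemma cns_tl (f : ℕ →₀ ℕ) : cns (f 0) (tl f) = f := by
  ext i
  cases i with
  | zero => simp
  | succ j => simp

lemma tl_cns (a : ℕ) (g : ℕ →₀ ℕ) : tl (cns a g) = g := by
  ext i; simp

lemma sum_cns (a : ℕ) (g : ℕ →₀ ℕ) :
    ((cns a g).sum fun i b => b * 2 ^ i) = a + 2 * (g.sum fun i b => b * 2 ^ i) := by
  rw [cns, Finsupp.sum_add_index' (by simp) (fun i b c => add_mul b c _)]
  rw [Finsupp.sum_embDomain, Finsupp.sum_single_index (by simp)]
  simp only [Function.Embedding.coeFn_mk, pow_zero, mul_one]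
  congr 1
  rw [Finsupp.mul_sum]
  apply Finsupp.sum_congr
  intro i _
  rw [pow_succ]
  ring

lemma sum_eq (f : ℕ →₀ ℕ) :
    (f.sum fun i b => b * 2 ^ i) = f 0 + 2 * ((tl f).sum fun i b => b * 2 ^ i) := by
  conv_lhs => rw [← cns_tl f]
  rw [sum_cns]

noncomputable def H (N : ℕ) : ℕ :=
  Nat.card {f : ℕ →₀ ℕ // (∀ i, f i ≤ 2) ∧ (f.sum fun i a => a * 2 ^ i) = N}

lemma term_le (f : ℕ →₀ ℕ) (i : ℕ) : f i * 2 ^ i ≤ f.sum fun i a => a * 2 ^ i := by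
  by_cases h : i ∈ f.support
  · exact Finset.single_le_sum (f := fun j => f j * 2 ^ j) (fun j _ => Nat.zero_le _) h
  · simp [Finsupp.notMem_support_iff.mp h]

instance finT (N : ℕ) :
    Finite {f : ℕ →₀ ℕ // (∀ i, f i ≤ 2) ∧ (f.sum fun i a => a * 2 ^ i) = N} := by
  apply Finite.of_injective
    (fun f => (fun i : Fin (N + 1) => (⟨f.1 i, Nat.lt_succ_of_le (f.2.1 i)⟩ : Fin 3)))
  intro f g h
  have key : ∀ (f : ℕ →₀ ℕ), (∀ i, f i ≤ 2) → (f.sum fun i a => a * 2 ^ i) = N →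
      ∀ i, N < i → f i = 0 := by
    intro f _ hs i hi
    by_contra hne
    have h1 : 1 ≤ f i := Nat.one_le_iff_ne_zero.mpr hne
    have hle := term_le f i
    rw [hs] at hle
    have h2 : 2 ^ i ≤ f i * 2 ^ i := Nat.le_mul_of_pos_left _ h1
    have h3 : i < 2 ^ i := Nat.lt_two_pow_self
    omega
  ext1; ext i
  by_cases hi : i < N + 1
  · have := congrFun h ⟨i, hi⟩
    simpa using congrArg Fin.val this
  · rw [key f.1 f.2.1 f.2.2 i (by omega), key g.1 g.2.1 g.2.2 i (by omega)]

lemma H_zero : H 0 = 1 := by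
  rw [H, Nat.card_eq_one_iff_unique]
  constructor
  · constructor
    intro f g
    have hz : ∀ (f : {f : ℕ →₀ ℕ // (∀ i, f i ≤ 2) ∧ (f.sum fun i a => a * 2 ^ i) = 0}),
        f.1 = 0 := by
      intro f
      ext i
      have h1 := term_le f.1 i
      rw [f.2.2] at h1
      have h2 : 0 < 2 ^ i := Nat.pow_pos (by norm_num)
      have h3 : f.1 i * 2 ^ i = 0 := Nat.le_zero.mp h1
      simp only [Finsupp.coe_zero, Pi.zero_apply]
      rcases Nat.mul_eq_zero.mp h3 with h4 | h4
      · exact h4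
      · omega
    ext1
    rw [hz f, hz g]
  · exact ⟨⟨0, fun i => by simp, by simp⟩⟩

noncomputable def oddEquiv (m : ℕ) :
    {f : ℕ →₀ ℕ // (∀ i, f i ≤ 2) ∧ (f.sum fun i a => a * 2 ^ i) = 2 * m + 1} ≃
    {g : ℕ →₀ ℕ // (∀ i, g i ≤ 2) ∧ (g.sum fun i a => a * 2 ^ i) = m} where
  toFun f := ⟨tl f.1, fun i => f.2.1 (i + 1), by
    have hs := sum_eq f.1
    rw [f.2.2] at hs
    have h0 := f.2.1 0
    omega⟩
  invFun g := ⟨cns 1 g.1, by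
    intro i; cases i with
    | zero => simp
    | succ j => simpa using g.2.1 j, by
    rw [sum_cns, g.2.2]; ring⟩
  left_inv f := by
    have h0 : f.1 0 = 1 := by
      have hs := sum_eq f.1
      rw [f.2.2] at hs
      have := f.2.1 0
      omega
    ext i
    cases i with
    | zero => simp [h0]
    | succ j => simp
  right_inv g := by
    ext i
    simp

lemma H_odd (m : ℕ) : H (2 * m + 1) = H m := Nat.card_congr (oddEquiv m)

noncomputable def evenFun (m : ℕ) (hm : 1 ≤ m) :
    ({g : ℕ →₀ ℕ // (∀ i, g i ≤ 2) ∧ (g.sum fun i a => a * 2 ^ i) = m} ⊕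
     {g : ℕ →₀ ℕ // (∀ i, g i ≤ 2) ∧ (g.sum fun i a => a * 2 ^ i) = m - 1}) →
    {f : ℕ →₀ ℕ // (∀ i, f i ≤ 2) ∧ (f.sum fun i a => a * 2 ^ i) = 2 * m} :=
  Sum.elim
    (fun g => ⟨cns 0 g.1, by
        intro i; cases i with
        | zero => simp
        | succ j => simpa using g.2.1 j, by
      rw [sum_cns, g.2.2]; ring⟩)
    (fun g => ⟨cns 2 g.1, by
        intro i; cases i with
        | zero => simp
        | succ j => simpa using g.2.1 j, by
      rw [sum_cns, g.2.2]; omega⟩)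

lemma evenFun_bijective (m : ℕ) (hm : 1 ≤ m) : Function.Bijective (evenFun m hm) := by
  constructor
  · intro x y h
    have hval : (evenFun m hm x).1 = (evenFun m hm y).1 := congrArg Subtype.val h
    cases x with
    | inl g => cases y with
      | inl g' =>
        congr 1
        ext1
        have := congrArg tl hval
        simpa [evenFun, tl_cns] using this
      | inr g' =>
        exfalso
        have := DFunLike.congr_fun hval 0
        simp [evenFun] at this
    | inr g => cases y with
      | inl g' =>
        exfalso
        have := DFunLike.congr_fun hval 0
        simp [evenFun] at this
      | inr g' =>
        congr 1
        ext1
        have := congrArg tl hval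
        simpa [evenFun, tl_cns] using this
  · intro f
    have hs := sum_eq f.1
    rw [f.2.2] at hs
    have h0 := f.2.1 0
    have : f.1 0 = 0 ∨ f.1 0 = 2 := by omega
    rcases this with h | h
    · refine ⟨Sum.inl ⟨tl f.1, fun i => f.2.1 (i + 1), by omega⟩, ?_⟩
      ext i
      cases i with
      | zero => simp [evenFun, h]
      | succ j => simp [evenFun]
    · refine ⟨Sum.inr ⟨tl f.1, fun i => f.2.1 (i + 1), by omega⟩, ?_⟩
      ext i
      cases i with
      | zero => simp [evenFun, h]
      | succ j => simp [evenFun]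

lemma H_even (m : ℕ) (hm : 1 ≤ m) : H (2 * m) = H m + H (m - 1) := by
  rw [H, ← Nat.card_congr (Equiv.ofBijective _ (evenFun_bijective m hm)), Nat.card_sum]
  rfl

end Stmt1Aux

/-- If s(0)=0 and, for n ≥ 1, s(n) counts hyper-binary expansions of n-1
(expansions n-1 = Σ a_i 2^i with digits a_i ∈ {0,1,2}), then s is Stern's
diatomic sequence: s(1)=1, s(2n)=s(n), s(2n+1)=s(n)+s(n+1). -/
theorem stmt1 (s : ℕ → ℕ) (h0 : s 0 = 0)
    (hcount : ∀ n : ℕ, 1 ≤ n → s n = Nat.card {f : ℕ →₀ ℕ //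
      (∀ i, f i ≤ 2) ∧ (f.sum fun i a => a * 2 ^ i) = n - 1}) :
    s 1 = 1 ∧ ∀ n : ℕ, s (2 * n) = s n ∧ s (2 * n + 1) = s n + s (n + 1) := by
  have hH : ∀ n : ℕ, 1 ≤ n → s n = Stmt1Aux.H (n - 1) := fun n hn => hcount n hn
  have hs1 : s 1 = 1 := by rw [hH 1 le_rfl]; exact Stmt1Aux.H_zero
  refine ⟨hs1, fun n => ?_⟩
  constructor
  · rcases Nat.eq_zero_or_pos n with hn | hn
    · subst hn; rfl
    · rw [hH (2 * n) (by omega), hH n hn]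
      have h2 : 2 * n - 1 = 2 * (n - 1) + 1 := by omega
      rw [h2, Stmt1Aux.H_odd]
  · rcases Nat.eq_zero_or_pos n with hn | hn
    · subst hn; simp [h0, hs1]
    · rw [hH (2 * n + 1) (by omega), hH n hn, hH (n + 1) (by omega)]
      simp only [Nat.add_sub_cancel]
      rw [Stmt1Aux.H_even n hn, Nat.add_comm]
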